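/- Let y be a complex number with cosh(y/2) ≠ 0, and write tanh(y/2) = ρ e^{iα} with ρ ≥ 0 and α real. Then 1 + ρ² − 2ρ cos α > 0 and |e^{y}|² = (1 + ρ² + 2ρ cos α)/(1 + ρ² − 2ρ cos α). -/

import Mathlib

/-- The modulus formula (24) for `|e^y|²` in terms of the polar form
`tanh(y/2) = ρ e^{iα}`. -/
theorem stmt_10 (y : ℂ) (hy : Complex.cosh (y / 2) ≠ 0) (ρ α : ℝ) (hρ : 0 ≤ ρ)
    (hpolar : Complex.tanh (y / 2) = (ρ : ℂ) * Complex.exp ((α : ℂ) * Complex.I)) :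
    0 < 1 + ρ ^ 2 - 2 * ρ * Real.cos α ∧
    ‖Complex.exp y‖ ^ 2 =
      (1 + ρ ^ 2 + 2 * ρ * Real.cos α) / (1 + ρ ^ 2 - 2 * ρ * Real.cos α) := by
  have h1p : (1 : ℂ) + Complex.tanh (y / 2) =
      Complex.exp (y / 2) / Complex.cosh (y / 2) := by
    rw [Complex.tanh_eq_sinh_div_cosh, ← Complex.cosh_add_sinh (y / 2)]
    field_simp
  have h1m : (1 : ℂ) - Complex.tanh (y / 2) =
      Complex.exp (-(y / 2)) / Complex.cosh (y / 2) := by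
    rw [Complex.tanh_eq_sinh_div_cosh, ← Complex.cosh_sub_sinh (y / 2)]
    field_simp
  have h1m_ne : (1 : ℂ) - Complex.tanh (y / 2) ≠ 0 := by
    rw [h1m]
    exact div_ne_zero (Complex.exp_ne_zero _) hy
  have hexp : Complex.exp y =
      ((1 : ℂ) + Complex.tanh (y / 2)) / ((1 : ℂ) - Complex.tanh (y / 2)) := by
    rw [h1p, h1m, div_div_div_comm, div_self hy, div_one,
      Complex.exp_neg, div_inv_eq_mul, ← Complex.exp_add, add_halves]
  have hsq : Real.sin α ^ 2 + Real.cos α ^ 2 = 1 := Real.sin_sq_add_cos_sq α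
  have hnp : Complex.normSq ((1 : ℂ) + (ρ : ℂ) * Complex.exp ((α : ℂ) * Complex.I)) =
      1 + ρ ^ 2 + 2 * ρ * Real.cos α := by
    rw [Complex.exp_mul_I]
    simp [Complex.normSq_apply, Complex.cos_ofReal_re, Complex.sin_ofReal_re]
    nlinarith [hsq]
  have hnm : Complex.normSq ((1 : ℂ) - (ρ : ℂ) * Complex.exp ((α : ℂ) * Complex.I)) =
      1 + ρ ^ 2 - 2 * ρ * Real.cos α := by
    rw [Complex.exp_mul_I]
    simp [Complex.normSq_apply, Complex.cos_ofReal_re, Complex.sin_ofReal_re]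
    nlinarith [hsq]
  have hpos : 0 < 1 + ρ ^ 2 - 2 * ρ * Real.cos α := by
    rw [← hnm, ← hpolar]
    exact Complex.normSq_pos.mpr h1m_ne
  refine ⟨hpos, ?_⟩
  rw [hexp, hpolar, norm_div, div_pow, Complex.sq_norm, Complex.sq_norm, hnp, hnm]
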